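/- Let 0 ≤ k < d and let F be an infinite collection of axis-parallel boxes in ℝ^d that cannot be pierced by any finite collection of axis-parallel k-flats. Then F contains an infinite sequence {B_n} of boxes such that no axis-parallel k-flat intersects two distinct boxes of the sequence. -/

import Mathlib

open Set

/-- An axis-parallel box in `ℝ^d`: a product of closed bounded intervals. -/
def IsBox {d : ℕ} (B : Set (Fin d → ℝ)) : Prop :=
  ∃ a b : Fin d → ℝ, (∀ i, a i ≤ b i) ∧ B = {x | ∀ i, x i ∈ Set.Icc (a i) (b i)}

/-- An axis-parallel `k`-flat in `ℝ^d`: coordinates in a set `I` of size `d - k` are fixed. -/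
def IsAxisFlat {d : ℕ} (k : ℕ) (K : Set (Fin d → ℝ)) : Prop :=
  ∃ (I : Finset (Fin d)) (c : Fin d → ℝ), I.card = d - k ∧ K = {x | ∀ i ∈ I, x i = c i}

/-- An axis-parallel hyperplane in `ℝ^d`. -/
def IsAxisHyperplane {d : ℕ} (H : Set (Fin d → ℝ)) : Prop :=
  ∃ (i : Fin d) (c : ℝ), H = {x | x i = c}

/-- `F` is pierceable by finitely many axis-parallel `k`-flats. -/
def PiercedByFlats {d : ℕ} (k : ℕ) (F : Set (Set (Fin d → ℝ))) : Prop :=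
  ∃ K : Finset (Set (Fin d → ℝ)), (∀ f ∈ K, IsAxisFlat k f) ∧
    ∀ B ∈ F, ∃ f ∈ K, (B ∩ f).Nonempty

/-- `F` is pierceable by finitely many axis-parallel hyperplanes. -/
def PiercedByHyperplanes {d : ℕ} (F : Set (Set (Fin d → ℝ))) : Prop :=
  ∃ H : Finset (Set (Fin d → ℝ)), (∀ h ∈ H, IsAxisHyperplane h) ∧
    ∀ B ∈ F, ∃ h ∈ H, (B ∩ h).Nonempty

open Filter

namespace StabAux

structure Bigness (e : ℕ) (ι : Type) (lo hi : ι → Fin e → ℝ) (Big : Set ι → Prop) : Prop where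
  mono : ∀ {Y Z : Set ι}, Y ⊆ Z → Big Y → Big Z
  union : ∀ {Y Z : Set ι}, Big (Y ∪ Z) → Big Y ∨ Big Z
  slice : ∀ {Y : Set ι} (j : Fin e) (c : ℝ), Big Y → Big {x ∈ Y | ¬(lo x j ≤ c ∧ c ≤ hi x j)}
  nonem : ∀ {Y : Set ι}, Big Y → Y.Nonempty

variable {e : ℕ} {ι : Type} {lo hi : ι → Fin e → ℝ} {Big : Set ι → Prop}

def InsS (lo hi : ι → Fin e → ℝ) (Y : Set ι) (B : ι) (j : Fin e) : Set ι :=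
  {C | C ∈ Y ∧ lo B j < lo C j ∧ hi C j < hi B j}

lemma InsS_mono {Y Z : Set ι} (h : Y ⊆ Z) (B : ι) (j : Fin e) :
    InsS lo hi Y B j ⊆ InsS lo hi Z B j := fun _ hC => ⟨h hC.1, hC.2⟩

lemma Bigness.cover (hB : Bigness e ι lo hi Big) {Y A B : Set ι}
    (hY : Big Y) (hsub : Y ⊆ A ∪ B) (hA : ¬ Big A) : Big B := by
  have h1 : Big ((Y ∩ A) ∪ (Y ∩ B)) := by
    refine hB.mono (fun y hy => ?_) hY
    rcases hsub hy with h | h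
    · exact Or.inl ⟨hy, h⟩
    · exact Or.inr ⟨hy, h⟩
  rcases hB.union h1 with h | h
  · exact absurd (hB.mono inter_subset_right h) hA
  · exact hB.mono inter_subset_right h

lemma Bigness.cover_iUnion (hB : Bigness e ι lo hi Big) {κ : Type*} (s : Finset κ)
    (S : κ → Set ι) {Y A : Set ι} (hY : Big Y)
    (hsub : Y ⊆ A ∪ ⋃ j ∈ s, S j) (hA : ¬ Big A) : ∃ j ∈ s, Big (S j) := by
  classical
  induction s using Finset.induction_on generalizing Y with
  | empty =>
    simp only [Finset.notMem_empty, iUnion_of_empty, iUnion_empty, union_empty] at hsub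
    exact absurd (hB.mono hsub hY) hA
  | @insert a s ha ih =>
    have hsub' : Y ⊆ (A ∪ ⋃ j ∈ s, S j) ∪ S a := by
      intro y hy
      rcases hsub hy with h | h
      · exact Or.inl (Or.inl h)
      · simp only [mem_iUnion] at h
        obtain ⟨j, hj, hyj⟩ := h
        rcases Finset.mem_insert.mp hj with rfl | hj
        · exact Or.inr hyj
        · exact Or.inl (Or.inr (mem_iUnion.mpr ⟨j, mem_iUnion.mpr ⟨hj, hyj⟩⟩))
    by_cases hU : Big (⋃ j ∈ s, S j)
    · obtain ⟨j, hj, hbig⟩ := ih hU subset_union_right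
      exact ⟨j, Finset.mem_insert_of_mem hj, hbig⟩
    · have : Big (S a) := by
        refine hB.cover hY hsub' ?_
        intro hcontra
        rcases hB.union hcontra with h | h
        · exact hA h
        · exact hU h
      exact ⟨a, Finset.mem_insert_self a s, this⟩

lemma Bigness.slices (hB : Bigness e ι lo hi Big) {Y : Set ι} (hY : Big Y)
    (L : List (Fin e × ℝ)) :
    Big {x ∈ Y | ∀ p ∈ L, ¬(lo x p.1 ≤ p.2 ∧ p.2 ≤ hi x p.1)} := by
  induction L with
  | nil => exact hB.mono (fun x hx => ⟨hx, by simp⟩) hY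
  | cons p L ih =>
    have h1 := hB.slice p.1 p.2 ih
    refine hB.mono (fun x hx => ?_) h1
    obtain ⟨⟨hxY, hxL⟩, hxp⟩ := hx
    refine ⟨hxY, fun q hq => ?_⟩
    rcases List.mem_cons.mp hq with rfl | hq
    · exact hxp
    · exact hxL q hq

section Step

variable {X : Set ι}

/-- If no element of `X` is "good" (has a big fully-disjoint part), then every big
`Y ⊆ X` and every `B ∈ Y` have a coordinate where the inside-family is big. -/
lemma conflict_lemma (hB : Bigness e ι lo hi Big)
    (hE : ∀ x ∈ X, ¬ Big {y ∈ X | ∀ j, hi x j < lo y j ∨ hi y j < lo x j})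
    {Y : Set ι} (hYX : Y ⊆ X) (hY : Big Y) {B : ι} (hBY : B ∈ Y) :
    ∃ j, Big (InsS lo hi Y B j) := by
  classical
  set L : List (Fin e × ℝ) :=
    (List.finRange e).flatMap (fun j => [(j, lo B j), (j, hi B j)]) with hL
  have hZ := hB.slices hY L
  set D : Set ι := {y ∈ X | ∀ j, hi B j < lo y j ∨ hi y j < lo B j} with hD
  have hND : ¬ Big D := hE B (hYX hBY)
  have hsub : {x ∈ Y | ∀ p ∈ L, ¬(lo x p.1 ≤ p.2 ∧ p.2 ≤ hi x p.1)} ⊆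
      D ∪ ⋃ j ∈ (Finset.univ : Finset (Fin e)), InsS lo hi Y B j := by
    intro y hy
    obtain ⟨hyY, hcorner⟩ := hy
    by_cases hIns : ∃ j, lo B j < lo y j ∧ hi y j < hi B j
    · obtain ⟨j, hj⟩ := hIns
      exact Or.inr (mem_iUnion.mpr ⟨j, mem_iUnion.mpr ⟨Finset.mem_univ j, ⟨hyY, hj⟩⟩⟩)
    · push_neg at hIns
      refine Or.inl ⟨hYX hyY, fun j => ?_⟩
      have h1 : ¬(lo y j ≤ lo B j ∧ lo B j ≤ hi y j) := by
        refine hcorner (j, lo B j) ?_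
        exact List.mem_flatMap.mpr ⟨j, List.mem_finRange j, by simp⟩
      have h2 : ¬(lo y j ≤ hi B j ∧ hi B j ≤ hi y j) := by
        refine hcorner (j, hi B j) ?_
        exact List.mem_flatMap.mpr ⟨j, List.mem_finRange j, by simp⟩
      by_contra hcon
      push_neg at hcon
      obtain ⟨hc1, hc2⟩ := hcon
      rcases le_or_gt (lo y j) (lo B j) with hI | hI
      · exact h1 ⟨hI, hc2⟩
      · exact h2 ⟨hc1, hIns j hI⟩
  obtain ⟨j, _, hbig⟩ := hB.cover_iUnion Finset.univ _ hZ hsub hND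
  exact ⟨j, hbig⟩

/-- Good coordinate lemma. -/
lemma good_exists (hB : Bigness e ι lo hi Big)
    (hE : ∀ x ∈ X, ¬ Big {y ∈ X | ∀ j, hi x j < lo y j ∨ hi y j < lo x j})
    {X' : Set ι} (hX'X : X' ⊆ X) (hX' : Big X') :
    ∃ j, ∃ H, H ⊆ X' ∧ Big H ∧
      ∀ Y, Y ⊆ H → Big Y → ∃ B ∈ Y, Big (InsS lo hi Y B j) := by
  classical
  by_contra hng
  push_neg at hng
  -- hng : ∀ j H, H ⊆ X' → Big H → ∃ Y, Y ⊆ H ∧ Big Y ∧ ∀ B ∈ Y, ¬ Big (InsS lo hi Y B j)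
  have key : ∀ s : Finset (Fin e), ∃ H, H ⊆ X' ∧ Big H ∧
      ∀ j ∈ s, ∀ B ∈ H, ¬ Big (InsS lo hi H B j) := by
    intro s
    induction s using Finset.induction_on with
    | empty => exact ⟨X', subset_rfl, hX', by simp⟩
    | @insert a s ha ih =>
      obtain ⟨H, hHX', hHbig, hHdead⟩ := ih
      obtain ⟨Y, hYH, hYbig, hYdead⟩ := hng a H hHX' hHbig
      refine ⟨Y, hYH.trans hHX', hYbig, fun j hj B hBY => ?_⟩
      rcases Finset.mem_insert.mp hj with rfl | hj
      · exact hYdead B hBY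
      · intro hbig
        exact hHdead j hj B (hYH hBY) (hB.mono (InsS_mono hYH B j) hbig)
  obtain ⟨H, hHX', hHbig, hHdead⟩ := key Finset.univ
  obtain ⟨B, hBH⟩ := hB.nonem hHbig
  obtain ⟨j, hbig⟩ := conflict_lemma hB hE (hHX'.trans hX'X) hHbig hBH
  exact hHdead j (Finset.mem_univ j) B hBH hbig

end Step

/-- The endgame of the shrinking-interval machine: a decreasing chain of big families which
is eventually separated (at coordinate `j`) from any fixed member of the chain's start
contradicts entanglement, using the inductive hypothesis in one dimension lower. -/
lemma endgame_lemma {e : ℕ} {ι : Type} {lo hi : ι → Fin (e+1) → ℝ} {Big : Set ι → Prop}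
    {X : Set ι} (hB : Bigness (e+1) ι lo hi Big)
    (hle : ∀ x j', lo x j' ≤ hi x j')
    (hE : ∀ x ∈ X, ¬ Big {y ∈ X | ∀ j, hi x j < lo y j ∨ hi y j < lo x j})
    (IH : ∀ (lo' hi' : ι → Fin e → ℝ), (∀ x t, lo' x t ≤ hi' x t) →
      ∀ (Big' : Set ι → Prop), Bigness e ι lo' hi' Big' →
      ∀ X', Big' X' →
        ∃ x ∈ X', Big' {y ∈ X' | ∀ j, hi' x j < lo' y j ∨ hi' y j < lo' x j})
    (j : Fin (e+1)) (R : ℕ → Set ι) (hdec : ∀ n, R (n+1) ⊆ R n)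
    (hbig : ∀ n, Big (R n)) (hR0X : R 0 ⊆ X)
    (hsep : ∀ x ∈ R 0, ∃ n, ∀ y ∈ R n, hi y j < lo x j ∨ hi x j < lo y j) : False := by
  classical
  have hdec' : ∀ n m, n ≤ m → R m ⊆ R n := by
    intro n m h
    induction h with
    | refl => exact subset_rfl
    | step _ ih => exact (hdec _).trans ih
  set lo' : ι → Fin e → ℝ := fun x t => lo x (j.succAbove t) with hlo'
  set hi' : ι → Fin e → ℝ := fun x t => hi x (j.succAbove t) with hhi'
  set Big' : Set ι → Prop := fun Y => ∀ n, Big (Y ∩ R n) with hBig'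
  have hB' : Bigness e ι lo' hi' Big' := by
    constructor
    · intro Y Z hYZ hY n
      exact hB.mono (inter_subset_inter_left _ hYZ) (hY n)
    · intro Y Z hYZ
      by_contra hcon
      push_neg at hcon
      obtain ⟨h1', h2'⟩ := hcon
      simp only [hBig', not_forall] at h1' h2'
      obtain ⟨nY, hnY⟩ := h1'
      obtain ⟨nZ, hnZ⟩ := h2'
      have h1 : Big ((Y ∪ Z) ∩ R (max nY nZ)) := hYZ _
      have h2 : (Y ∪ Z) ∩ R (max nY nZ) = (Y ∩ R (max nY nZ)) ∪ (Z ∩ R (max nY nZ)) :=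
        union_inter_distrib_right ..
      rw [h2] at h1
      rcases hB.union h1 with h | h
      · exact hnY (hB.mono (inter_subset_inter_right _ (hdec' _ _ (le_max_left _ _))) h)
      · exact hnZ (hB.mono (inter_subset_inter_right _ (hdec' _ _ (le_max_right _ _))) h)
    · intro Y t c hY n
      have h1 := hB.slice (j.succAbove t) c (hY n)
      refine hB.mono (fun x hx => ?_) h1
      obtain ⟨⟨hxY, hxR⟩, hxs⟩ := hx
      exact ⟨⟨hxY, hxs⟩, hxR⟩
    · intro Y hY
      obtain ⟨x, hx, _⟩ := hB.nonem (hY 0)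
      exact ⟨x, hx⟩
  have hR0' : Big' (R 0) := by
    intro n
    exact hB.mono (fun x hx => ⟨hdec' 0 n (Nat.zero_le n) hx, hx⟩) (hbig n)
  obtain ⟨x, hxR0, hW⟩ := IH lo' hi' (fun x t => hle x (j.succAbove t)) Big' hB' (R 0) hR0'
  obtain ⟨n, hn⟩ := hsep x hxR0
  have hWn : Big ({y ∈ R 0 | ∀ t, hi' x t < lo' y t ∨ hi' y t < lo' x t} ∩ R n) := hW n
  have hfinal : Big {y ∈ X | ∀ j', hi x j' < lo y j' ∨ hi y j' < lo x j'} := by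
    refine hB.mono (fun y hy => ?_) hWn
    obtain ⟨⟨hyR0, hyt⟩, hyRn⟩ := hy
    refine ⟨hR0X hyR0, fun j' => ?_⟩
    by_cases hj' : j' = j
    · subst hj'
      exact (hn y hyRn).symm
    · obtain ⟨t, ht⟩ := Fin.exists_succAbove_eq hj'
      have := hyt t
      rw [hlo', hhi'] at this
      simpa [ht] using this
  exact hE x (hR0X hxR0) hfinal

/-- The shrinking-interval machine: given a "good" coordinate `j` on `H`, produce a big
subfamily of `H` on which coordinate `j` is dead. -/
lemma machine_lemma {e : ℕ} {ι : Type} {lo hi : ι → Fin (e+1) → ℝ} {Big : Set ι → Prop}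
    {X : Set ι} (hB : Bigness (e+1) ι lo hi Big)
    (hle : ∀ x j', lo x j' ≤ hi x j')
    (hE : ∀ x ∈ X, ¬ Big {y ∈ X | ∀ j, hi x j < lo y j ∨ hi y j < lo x j})
    (IH : ∀ (lo' hi' : ι → Fin e → ℝ), (∀ x t, lo' x t ≤ hi' x t) →
      ∀ (Big' : Set ι → Prop), Bigness e ι lo' hi' Big' →
      ∀ X', Big' X' →
        ∃ x ∈ X', Big' {y ∈ X' | ∀ j, hi' x j < lo' y j ∨ hi' y j < lo' x j})
    (j : Fin (e+1)) {H : Set ι} (hHX : H ⊆ X) (hH : Big H)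
    (hgood : ∀ Y, Y ⊆ H → Big Y → ∃ B ∈ Y, Big (InsS lo hi Y B j)) :
    ∃ X'', X'' ⊆ H ∧ Big X'' ∧
      ∀ Y, Y ⊆ X'' → Big Y → ∀ B ∈ Y, ¬ Big (InsS lo hi Y B j) := by
  classical
  have hne : Nonempty ι := ⟨(hB.nonem hH).choose⟩
  set len : ι → ℝ := fun B => hi B j - lo B j with hlen
  set Q : Set ι → Set ι := fun Y => {B | B ∈ Y ∧ Big (InsS lo hi Y B j)} with hQdef
  set mus : Set ι → ℝ := fun Y => sInf (len '' Q Y) with hmus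
  have hbdd : ∀ Y : Set ι, BddBelow (len '' Q Y) := by
    intro Y
    refine ⟨0, fun r hr => ?_⟩
    obtain ⟨B, _, rfl⟩ := hr
    have := hle B j
    simp only [hlen]
    linarith
  have hstep : ∀ (n : ℕ) (Y : Set ι), ∃ B : ι,
      (Big Y ∧ Y ⊆ H) → (B ∈ Y ∧ Big (InsS lo hi Y B j) ∧ len B < mus Y + (1/2)^n) := by
    intro n Y
    by_cases hY : Big Y ∧ Y ⊆ H
    · obtain ⟨B0, hB0Y, hB0big⟩ := hgood Y hY.2 hY.1
      have hQne : (len '' Q Y).Nonempty := ⟨len B0, B0, ⟨hB0Y, hB0big⟩, rfl⟩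
      have hlt : sInf (len '' Q Y) < mus Y + (1/2)^n := by
        have : (0:ℝ) < (1/2)^n := by positivity
        simp only [hmus]
        linarith
      obtain ⟨r, hrmem, hrlt⟩ := exists_lt_of_csInf_lt hQne hlt
      obtain ⟨B, hBQ, rfl⟩ := hrmem
      exact ⟨B, fun _ => ⟨hBQ.1, hBQ.2, hrlt⟩⟩
    · exact ⟨Classical.arbitrary ι, fun h => absurd h hY⟩
  choose Bf hBf using hstep
  set Yseq : ℕ → Set ι := fun n => Nat.rec H (fun n Y => InsS lo hi Y (Bf n Y) j) n with hYseq
  have hYsucc : ∀ n, Yseq (n+1) = InsS lo hi (Yseq n) (Bf n (Yseq n)) j := fun n => rfl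
  set Bn : ℕ → ι := fun n => Bf n (Yseq n) with hBndef
  have hInv : ∀ n, Big (Yseq n) ∧ Yseq n ⊆ H := by
    intro n
    induction n with
    | zero => exact ⟨hH, subset_rfl⟩
    | succ n ih =>
      have h := hBf n (Yseq n) ⟨ih.1, ih.2⟩
      refine ⟨by rw [hYsucc]; exact h.2.1, ?_⟩
      rw [hYsucc]
      exact fun C hC => ih.2 hC.1
  have hspec : ∀ n, Bn n ∈ Yseq n ∧ Big (Yseq (n+1)) ∧ len (Bn n) < mus (Yseq n) + (1/2)^n := by
    intro n
    have h := hBf n (Yseq n) ⟨(hInv n).1, (hInv n).2⟩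
    exact ⟨h.1, by rw [hYsucc]; exact h.2.1, h.2.2⟩
  have hYdec : ∀ n, Yseq (n+1) ⊆ Yseq n := by
    intro n
    rw [hYsucc]
    exact fun C hC => hC.1
  set a : ℕ → ℝ := fun n => lo (Bn n) j with ha
  set b : ℕ → ℝ := fun n => hi (Bn n) j with hb
  have hmem_succ : ∀ n, a n < a (n+1) ∧ b (n+1) < b n := by
    intro n
    have h := (hspec (n+1)).1
    rw [hYsucc] at h
    exact ⟨h.2.1, h.2.2⟩
  have hamono : Monotone a := (strictMono_nat_of_lt_succ (fun n => (hmem_succ n).1)).monotone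
  have hbanti : Antitone b := (strictAnti_nat_of_succ_lt (fun n => (hmem_succ n).2)).antitone
  have haleb : ∀ n m, a n ≤ b m := by
    intro n m
    rcases le_total n m with h | h
    · exact (hamono h).trans (hle _ _)
    · exact (hle _ _).trans (hbanti h)
  have habdd : BddAbove (Set.range a) := ⟨b 0, fun r ⟨n, hn⟩ => hn ▸ haleb n 0⟩
  have hbbdd : BddBelow (Set.range b) := ⟨a 0, fun r ⟨n, hn⟩ => hn ▸ haleb 0 n⟩
  set α : ℝ := ⨆ n, a n with hα
  set β : ℝ := ⨅ n, b n with hβ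
  have ta : Tendsto a atTop (nhds α) := tendsto_atTop_ciSup hamono habdd
  have tb : Tendsto b atTop (nhds β) := tendsto_atTop_ciInf hbanti hbbdd
  have hαβ : α ≤ β := ciSup_le fun n => le_ciInf fun m => haleb n m
  have hBnQ : ∀ n, Bn n ∈ Q (Yseq n) := by
    intro n
    refine ⟨(hspec n).1, ?_⟩
    have := (hspec n).2.1
    rwa [hYsucc] at this
  have hQmono : ∀ n, Q (Yseq (n+1)) ⊆ Q (Yseq n) := by
    intro n B hB'
    exact ⟨hYdec n hB'.1, hB.mono (InsS_mono (hYdec n) B j) hB'.2⟩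
  have hμmono : Monotone (fun n => mus (Yseq n)) := by
    refine monotone_nat_of_le_succ fun n => ?_
    exact csInf_le_csInf (hbdd _) ⟨len (Bn (n+1)), Bn (n+1), hBnQ (n+1), rfl⟩
      (Set.image_mono (hQmono n))
  have hμle : ∀ n, mus (Yseq n) ≤ b n - a n :=
    fun n => csInf_le (hbdd _) ⟨Bn n, hBnQ n, rfl⟩
  have hμge : ∀ n, b n - a n - (1/2)^n ≤ mus (Yseq n) := by
    intro n
    have := (hspec n).2.2
    simp only [hlen] at this
    linarith
  have tpow : Tendsto (fun n : ℕ => ((1:ℝ)/2)^n) atTop (nhds 0) :=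
    tendsto_pow_atTop_nhds_zero_of_lt_one (by norm_num) (by norm_num)
  have tμ : Tendsto (fun n => mus (Yseq n)) atTop (nhds (β - α)) := by
    have h1 : Tendsto (fun n => b n - a n - (1/2)^n) atTop (nhds (β - α)) := by
      have := (tb.sub ta).sub tpow
      simpa using this
    exact tendsto_of_tendsto_of_tendsto_of_le_of_le h1 (tb.sub ta) hμge hμle
  have hμleΛ : ∀ n, mus (Yseq n) ≤ β - α := fun n => hμmono.ge_of_tendsto tμ n
  have haltα : ∀ n, a n < α := fun n => lt_of_lt_of_le (hmem_succ n).1 (le_ciSup habdd (n+1))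
  have hbgtβ : ∀ n, β < b n := fun n => lt_of_le_of_lt (ciInf_le hbbdd (n+1)) (hmem_succ n).2
  rcases eq_or_lt_of_le hαβ with hcase | hcase
  · -- Λ = 0 : the chain shrinks to the point α; endgame gives a contradiction with hE.
    exfalso
    set Gn : ℕ → Set ι := fun n => {C ∈ Yseq (n+1) | ¬(lo C j ≤ α ∧ α ≤ hi C j)} with hGn
    have hGbig : ∀ n, Big (Gn n) := fun n => hB.slice j α (hspec n).2.1
    set Rn : ℕ → Set ι := fun n => {C ∈ Gn n | α < lo C j} with hRn
    set Ln : ℕ → Set ι := fun n => {C ∈ Gn n | hi C j < α} with hLn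
    have hGcover : ∀ n, Gn n ⊆ Rn n ∪ Ln n := by
      intro n C hC
      rcases le_or_gt (lo C j) α with h | h
      · refine Or.inr ⟨hC, ?_⟩
        by_contra hcon
        push_neg at hcon
        exact hC.2 ⟨h, hcon⟩
      · exact Or.inl ⟨hC, h⟩
    have hGdec : ∀ n, Gn (n+1) ⊆ Gn n := by
      intro n C hC
      exact ⟨hYdec (n+1) hC.1, hC.2⟩
    have hRdec : ∀ n, Rn (n+1) ⊆ Rn n := fun n C hC => ⟨hGdec n hC.1, hC.2⟩
    have hLdec : ∀ n, Ln (n+1) ⊆ Ln n := fun n C hC => ⟨hGdec n hC.1, hC.2⟩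
    have hRdec' : ∀ n m, n ≤ m → Rn m ⊆ Rn n := by
      intro n m h
      induction h with
      | refl => exact subset_rfl
      | step _ ih => exact (hRdec _).trans ih
    have hLdec' : ∀ n m, n ≤ m → Ln m ⊆ Ln n := by
      intro n m h
      induction h with
      | refl => exact subset_rfl
      | step _ ih => exact (hLdec _).trans ih
    have hYX : ∀ n, Yseq (n+1) ⊆ X := fun n => (hInv (n+1)).2.trans hHX
    by_cases hR : ∀ n, Big (Rn n)
    · refine endgame_lemma hB hle hE IH j Rn hRdec hR (fun C hC => hYX 0 hC.1.1) ?_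
      intro x hx
      have hxlo : α < lo x j := hx.2
      have hev : ∀ᶠ n in atTop, b n < lo x j := by
        refine tb.eventually_lt_const ?_
        rw [← hcase]
        exact hxlo
      obtain ⟨N, hN⟩ := eventually_atTop.mp hev
      refine ⟨N, fun y hy => Or.inl ?_⟩
      have hyY : y ∈ Yseq (N+1) := hy.1.1
      rw [hYsucc] at hyY
      exact hyY.2.2.trans (hN N le_rfl)
    · push_neg at hR
      obtain ⟨n₀, hn₀⟩ := hR
      have hL : ∀ n, Big (Ln n) := by
        intro n
        have h1 : Big (Gn (max n n₀)) := hGbig _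
        have h2 : ¬ Big (Rn (max n n₀)) := by
          intro h
          exact hn₀ (hB.mono (hRdec' n₀ _ (le_max_right _ _)) h)
        have h3 : Big (Ln (max n n₀)) := hB.cover h1 (hGcover _) h2
        exact hB.mono (hLdec' n _ (le_max_left _ _)) h3
      refine endgame_lemma hB hle hE IH j Ln hLdec hL (fun C hC => hYX 0 hC.1.1) ?_
      intro x hx
      have hxhi : hi x j < α := hx.2
      have hev : ∀ᶠ n in atTop, hi x j < a n := ta.eventually_const_lt hxhi
      obtain ⟨N, hN⟩ := eventually_atTop.mp hev
      refine ⟨N, fun y hy => Or.inr ?_⟩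
      have hyY : y ∈ Yseq (N+1) := hy.1.1
      rw [hYsucc] at hyY
      exact (hN N le_rfl).trans hyY.2.1
  · -- Λ > 0 : deep members all contain the midpoint; slice it out to kill coordinate `j`.
    set mid : ℝ := (α + β)/2 with hmid
    have hmid1 : α < mid := by rw [hmid]; linarith
    have hmid2 : mid < β := by rw [hmid]; linarith
    have ev1 : ∀ᶠ n in atTop, b n - mus (Yseq n) < mid := by
      have h1 : Tendsto (fun n => b n - mus (Yseq n)) atTop (nhds α) := by
        have := tb.sub tμ
        have h2 : β - (β - α) = α := by ring
        rwa [h2] at this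
      exact h1.eventually_lt_const hmid1
    have ev2 : ∀ᶠ n in atTop, mid < a n + mus (Yseq n) := by
      have h1 : Tendsto (fun n => a n + mus (Yseq n)) atTop (nhds β) := by
        have := ta.add tμ
        have h2 : α + (β - α) = β := by ring
        rwa [h2] at this
      exact h1.eventually_const_lt hmid2
    obtain ⟨N, hN1, hN2⟩ := (ev1.and ev2).exists
    refine ⟨{C ∈ Yseq (N+1) | ¬(lo C j ≤ mid ∧ mid ≤ hi C j)}, ?_, ?_, ?_⟩
    · exact fun C hC => (hInv (N+1)).2 hC.1
    · exact hB.slice j mid (hspec N).2.1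
    · intro Y hYX'' hYbig B hBY hbig
      have hBin : B ∈ Yseq (N+1) := (hYX'' hBY).1
      have hBQ : B ∈ Q (Yseq (N+1)) := by
        refine ⟨hBin, hB.mono (InsS_mono (fun C hC => (hYX'' hC).1) B j) hbig⟩
      have hlenB : mus (Yseq (N+1)) ≤ len B := csInf_le (hbdd _) ⟨B, hBQ, rfl⟩
      have hlenB' : mus (Yseq N) ≤ len B := (hμmono (Nat.le_succ N)).trans hlenB
      have hBbounds : a N < lo B j ∧ hi B j < b N := by
        have := hBin
        rw [hYsucc] at this
        exact ⟨this.2.1, this.2.2⟩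
      have hc1 : lo B j ≤ mid := by
        have : len B = hi B j - lo B j := rfl
        have h1 := hBbounds.2
        linarith [hlenB', hN1]
      have hc2 : mid ≤ hi B j := by
        have : len B = hi B j - lo B j := rfl
        have h1 := hBbounds.1
        linarith [hlenB', hN2]
      exact (hYX'' hBY).2 ⟨hc1, hc2⟩

/-- Under entanglement (`hE`), we derive `False` by killing coordinates one at a time. -/
lemma step_false {e : ℕ} {ι : Type} {lo hi : ι → Fin (e+1) → ℝ} {Big : Set ι → Prop}
    {X : Set ι} (hB : Bigness (e+1) ι lo hi Big)
    (hle : ∀ x j', lo x j' ≤ hi x j')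
    (hE : ∀ x ∈ X, ¬ Big {y ∈ X | ∀ j, hi x j < lo y j ∨ hi y j < lo x j})
    (IH : ∀ (lo' hi' : ι → Fin e → ℝ), (∀ x t, lo' x t ≤ hi' x t) →
      ∀ (Big' : Set ι → Prop), Bigness e ι lo' hi' Big' →
      ∀ X', Big' X' →
        ∃ x ∈ X', Big' {y ∈ X' | ∀ j, hi' x j < lo' y j ∨ hi' y j < lo' x j})
    (hX : Big X) : False := by
  classical
  have M : ∀ (n : ℕ) (s : Finset (Fin (e+1))), s.card ≤ n →
      ∀ X', X' ⊆ X → Big X' →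
        (∀ j, j ∉ s → ∀ Y, Y ⊆ X' → Big Y → ∀ B ∈ Y, ¬ Big (InsS lo hi Y B j)) → False := by
    intro n
    induction n with
    | zero =>
      intro s hs X' hsub hbig hdead
      obtain ⟨j, H, hHX', hHbig, hgood⟩ := good_exists hB hE hsub hbig
      obtain ⟨B, hBH, hBbig⟩ := hgood H subset_rfl hHbig
      have hjs : j ∉ s := by
        have : s = ∅ := Finset.card_eq_zero.mp (Nat.le_antisymm hs (Nat.zero_le _))
        simp [this]
      exact hdead j hjs H hHX' hHbig B hBH hBbig
    | succ n ih =>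
      intro s hs X' hsub hbig hdead
      obtain ⟨j, H, hHX', hHbig, hgood⟩ := good_exists hB hE hsub hbig
      by_cases hjs : j ∈ s
      · obtain ⟨X'', hX''H, hX''big, hX''dead⟩ :=
          machine_lemma hB hle hE IH j (hHX'.trans hsub) hHbig hgood
        refine ih (s.erase j) ?_ X'' ((hX''H.trans hHX').trans hsub) hX''big ?_
        · have := Finset.card_erase_of_mem hjs
          omega
        · intro j' hj' Y hYX'' hYbig B hBY hbig'
          by_cases hjj : j' = j
          · subst hjj
            exact hX''dead Y hYX'' hYbig B hBY hbig'
          · have hj's : j' ∉ s := fun hmem => hj' (Finset.mem_erase.mpr ⟨hjj, hmem⟩)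
            exact hdead j' hj's Y (hYX''.trans (hX''H.trans hHX')) hYbig B hBY hbig'
      · obtain ⟨B, hBH, hBbig⟩ := hgood H subset_rfl hHbig
        exact hdead j hjs H hHX' hHbig B hBH hBbig
  refine M (e+1) Finset.univ ?_ X subset_rfl hX ?_
  · simp
  · intro j hj
    exact absurd (Finset.mem_univ j) hj

/-- Main abstract theorem: any big family contains a member whose fully-disjoint part is big. -/
theorem bigness_main : ∀ (e : ℕ) (ι : Type) (lo hi : ι → Fin e → ℝ),
    (∀ x j, lo x j ≤ hi x j) → ∀ (Big : Set ι → Prop), Bigness e ι lo hi Big →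
    ∀ X, Big X →
      ∃ x ∈ X, Big {y ∈ X | ∀ j, hi x j < lo y j ∨ hi y j < lo x j} := by
  intro e
  induction e with
  | zero =>
    intro ι lo hi hle Big hB X hX
    obtain ⟨x, hx⟩ := hB.nonem hX
    refine ⟨x, hx, hB.mono (fun y hy => ⟨hy, fun j => j.elim0⟩) hX⟩
  | succ e ih =>
    intro ι lo hi hle Big hB X hX
    by_contra hE
    push_neg at hE
    exact step_false hB hle (fun x hx => hE x hx)
      (fun lo' hi' hle' Big' hB' X' hX' => ih ι lo' hi' hle' Big' hB' X' hX') hX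

/-- From the abstract theorem, build an infinite pairwise fully-disjoint sequence. -/
theorem seq_build {e : ℕ} {ι : Type} {lo hi : ι → Fin e → ℝ}
    (hle : ∀ x j, lo x j ≤ hi x j) {Big : Set ι → Prop}
    (hB : Bigness e ι lo hi Big) {X : Set ι} (hX : Big X) :
    ∃ x : ℕ → ι, (∀ n, x n ∈ X) ∧
      ∀ n m, n < m → ∀ j, hi (x n) j < lo (x m) j ∨ hi (x m) j < lo (x n) j := by
  classical
  have hne : Nonempty ι := ⟨(hB.nonem hX).choose⟩
  have hstep : ∀ Y : Set ι, ∃ z : ι, Big Y →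
      (z ∈ Y ∧ Big {y ∈ Y | ∀ j, hi z j < lo y j ∨ hi y j < lo z j}) := by
    intro Y
    by_cases hY : Big Y
    · obtain ⟨z, hz, hbig⟩ := bigness_main e ι lo hi hle Big hB Y hY
      exact ⟨z, fun _ => ⟨hz, hbig⟩⟩
    · exact ⟨Classical.arbitrary ι, fun h => absurd h hY⟩
  choose zf hzf using hstep
  set Yseq : ℕ → Set ι := fun n => Nat.rec X
    (fun _ Y => {y ∈ Y | ∀ j, hi (zf Y) j < lo y j ∨ hi y j < lo (zf Y) j}) n with hYseq
  have hYsucc : ∀ n, Yseq (n+1) =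
      {y ∈ Yseq n | ∀ j, hi (zf (Yseq n)) j < lo y j ∨ hi y j < lo (zf (Yseq n)) j} :=
    fun n => rfl
  have hbig : ∀ n, Big (Yseq n) := by
    intro n
    induction n with
    | zero => exact hX
    | succ n ih =>
      rw [hYsucc]
      exact (hzf (Yseq n) ih).2
  have hdec : ∀ n, Yseq (n+1) ⊆ Yseq n := by
    intro n
    rw [hYsucc]
    exact fun y hy => hy.1
  have hdec' : ∀ n m, n ≤ m → Yseq m ⊆ Yseq n := by
    intro n m h
    induction h with
    | refl => exact subset_rfl
    | step _ ih => exact (hdec _).trans ih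
  have hsubX : ∀ n, Yseq n ⊆ X := fun n => hdec' 0 n (Nat.zero_le n)
  refine ⟨fun n => zf (Yseq n), fun n => hsubX n (hzf (Yseq n) (hbig n)).1, ?_⟩
  intro n m hnm j
  have hmem : zf (Yseq m) ∈ Yseq (n+1) := hdec' (n+1) m hnm ((hzf (Yseq m) (hbig m)).1)
  rw [hYsucc] at hmem
  exact hmem.2 j

end StabAux

namespace StabAux

/-- Core lemma: a family of boxes all meeting one fixed `(k+1)`-flat, which is not
finitely pierceable by `k`-flats, contains an infinite sequence no two members of which
meet a common `k`-flat. -/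
lemma core {d k : ℕ} (hk : k < d) (F' : Set (Set (Fin d → ℝ)))
    (hbox' : ∀ B ∈ F', IsBox B)
    (I : Finset (Fin d)) (c : Fin d → ℝ) (hI : I.card = d - (k+1))
    (hmeet : ∀ B ∈ F', (B ∩ {x | ∀ i ∈ I, x i = c i}).Nonempty)
    (hnp' : ¬ PiercedByFlats k F') :
    ∃ Bs : ℕ → Set (Fin d → ℝ), (∀ n, Bs n ∈ F') ∧ Function.Injective Bs ∧
      ∀ i j : ℕ, i ≠ j → ∀ K, IsAxisFlat k K →
        ¬ ((K ∩ Bs i).Nonempty ∧ (K ∩ Bs j).Nonempty) := by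
  classical
  have hrep : ∀ B : {B // B ∈ F'}, ∃ ab : (Fin d → ℝ) × (Fin d → ℝ),
      (∀ i, ab.1 i ≤ ab.2 i) ∧ (B : Set (Fin d → ℝ)) = {x | ∀ i, x i ∈ Set.Icc (ab.1 i) (ab.2 i)} := by
    intro B
    obtain ⟨a, b, h1, h2⟩ := hbox' B B.2
    exact ⟨(a, b), h1, h2⟩
  choose ab hab hBeq using hrep
  have hcmem : ∀ (y : {B // B ∈ F'}) (i : Fin d), i ∈ I →
      (ab y).1 i ≤ c i ∧ c i ≤ (ab y).2 i := by
    intro y i hiI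
    obtain ⟨x, hxB, hxf⟩ := hmeet y y.2
    have hx : x ∈ {x | ∀ i, x i ∈ Set.Icc ((ab y).1 i) ((ab y).2 i)} := by
      rw [← hBeq y]; exact hxB
    have := hx i
    rw [hxf i hiI] at this
    exact ⟨this.1, this.2⟩
  have hkd : k + 1 ≤ d := hk
  have hIc : Iᶜ.card = k + 1 := by
    rw [Finset.card_compl, hI]
    simp only [Fintype.card_fin]
    omega
  set emb : Fin (k+1) → Fin d := fun t => ((Iᶜ).orderIsoOfFin hIc t : Fin d) with hemb
  have hembc : ∀ t, emb t ∉ I := by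
    intro t
    exact Finset.mem_compl.mp ((Iᶜ).orderIsoOfFin hIc t).2
  have hembsurj : ∀ i : Fin d, i ∉ I → ∃ t, emb t = i := by
    intro i hi
    refine ⟨((Iᶜ).orderIsoOfFin hIc).symm ⟨i, Finset.mem_compl.mpr hi⟩, ?_⟩
    show (((Iᶜ).orderIsoOfFin hIc) (((Iᶜ).orderIsoOfFin hIc).symm ⟨i, Finset.mem_compl.mpr hi⟩) : Fin d) = i
    rw [OrderIso.apply_symm_apply]
  set lov : {B // B ∈ F'} → Fin (k+1) → ℝ := fun y t => (ab y).1 (emb t) with hlov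
  set hiv : {B // B ∈ F'} → Fin (k+1) → ℝ := fun y t => (ab y).2 (emb t) with hhiv
  set Big : Set {B // B ∈ F'} → Prop := fun Y =>
    ¬ ∃ K : Finset (Set (Fin d → ℝ)), (∀ f ∈ K, IsAxisFlat k f) ∧
      ∀ y ∈ Y, ∃ f ∈ K, ((y : Set (Fin d → ℝ)) ∩ f).Nonempty with hBigdef
  have hle : ∀ y t, lov y t ≤ hiv y t := fun y t => hab y (emb t)
  have hB : Bigness (k+1) {B // B ∈ F'} lov hiv Big := by
    constructor
    · intro Y Z hYZ hY hpz
      obtain ⟨K, h1, h2⟩ := hpz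
      exact hY ⟨K, h1, fun y hy => h2 y (hYZ hy)⟩
    · intro Y Z hYZ
      by_cases hY : Big Y
      · exact Or.inl hY
      · refine Or.inr ?_
        show ¬ ∃ K : Finset (Set (Fin d → ℝ)), (∀ f ∈ K, IsAxisFlat k f) ∧
          ∀ y ∈ Z, ∃ f ∈ K, ((y : Set (Fin d → ℝ)) ∩ f).Nonempty
        intro h2'
        have h1' : ∃ K : Finset (Set (Fin d → ℝ)), (∀ f ∈ K, IsAxisFlat k f) ∧
            ∀ y ∈ Y, ∃ f ∈ K, ((y : Set (Fin d → ℝ)) ∩ f).Nonempty := not_not.mp hY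
        obtain ⟨KY, hKY1, hKY2⟩ := h1'
        obtain ⟨KZ, hKZ1, hKZ2⟩ := h2'
        refine hYZ ⟨KY ∪ KZ, ?_, ?_⟩
        · intro f hf
          rcases Finset.mem_union.mp hf with hf | hf
          · exact hKY1 f hf
          · exact hKZ1 f hf
        · intro y hy
          rcases hy with hy | hy
          · obtain ⟨f, hf1, hf2⟩ := hKY2 y hy
            exact ⟨f, Finset.mem_union_left _ hf1, hf2⟩
          · obtain ⟨f, hf1, hf2⟩ := hKZ2 y hy
            exact ⟨f, Finset.mem_union_right _ hf1, hf2⟩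
    · intro Y t cc hY hps
      obtain ⟨K, hK1, hK2⟩ := hps
      set g : Set (Fin d → ℝ) := {z | ∀ i ∈ insert (emb t) I, z i = Function.update c (emb t) cc i}
        with hg
      have hgflat : IsAxisFlat k g := by
        refine ⟨insert (emb t) I, Function.update c (emb t) cc, ?_, rfl⟩
        rw [Finset.card_insert_of_notMem (fun h => hembc t h), hI]
        omega
      refine hY ⟨insert g K, ?_, ?_⟩
      · intro f hf
        rcases Finset.mem_insert.mp hf with rfl | hf
        · exact hgflat
        · exact hK1 f hf
      · intro y hy
        by_cases hyp : lov y t ≤ cc ∧ cc ≤ hiv y t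
        · refine ⟨g, Finset.mem_insert_self _ _, ?_⟩
          set z : Fin d → ℝ := fun i =>
            if i = emb t then cc else if i ∈ I then c i else (ab y).1 i with hz
          refine ⟨z, ?_, ?_⟩
          · rw [hBeq y]
            intro i
            by_cases hie : i = emb t
            · subst hie
              have hzv : z (emb t) = cc := by simp [hz]
              rw [hzv]
              exact ⟨hyp.1, hyp.2⟩
            · by_cases hiI : i ∈ I
              · have hzv : z i = c i := by simp [hz, hie, hiI]
                rw [hzv]
                exact ⟨(hcmem y i hiI).1, (hcmem y i hiI).2⟩
              · have hzv : z i = (ab y).1 i := by simp [hz, hie, hiI]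
                rw [hzv]
                exact ⟨le_refl _, hab y i⟩
          · intro i hi
            rcases Finset.mem_insert.mp hi with rfl | hiI
            · simp [hz, Function.update_self]
            · have hie : i ≠ emb t := fun h => hembc t (h ▸ hiI)
              simp [hz, hie, hiI, Function.update_of_ne hie]
        · obtain ⟨f, hf1, hf2⟩ := hK2 y ⟨hy, hyp⟩
          exact ⟨f, Finset.mem_insert_of_mem hf1, hf2⟩
    · intro Y hY
      by_contra hne
      rw [Set.not_nonempty_iff_eq_empty] at hne
      subst hne
      exact hY ⟨∅, by simp, by simp⟩
  have hXuniv : Big (Set.univ : Set {B // B ∈ F'}) := by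
    intro hps
    obtain ⟨K, h1, h2⟩ := hps
    exact hnp' ⟨K, h1, fun B hB' => h2 ⟨B, hB'⟩ (Set.mem_univ _)⟩
  obtain ⟨xs, hxsmem, hxsdisj⟩ := seq_build hle hB hXuniv
  -- pairwise separation at every coordinate outside `I`
  have hpair : ∀ n m, n ≠ m → ∀ i : Fin d, i ∉ I → ∀ v : ℝ,
      ¬((ab (xs n)).1 i ≤ v ∧ v ≤ (ab (xs n)).2 i ∧
        (ab (xs m)).1 i ≤ v ∧ v ≤ (ab (xs m)).2 i) := by
    intro n m hnm i hiI v hv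
    obtain ⟨t, rfl⟩ := hembsurj i hiI
    rcases Nat.lt_or_ge n m with h | h
    · rcases hxsdisj n m h t with hd | hd
      · simp only [hlov, hhiv] at hd
        linarith [hv.1, hv.2.1, hv.2.2.1, hv.2.2.2]
      · simp only [hlov, hhiv] at hd
        linarith [hv.1, hv.2.1, hv.2.2.1, hv.2.2.2]
    · have h' : m < n := Nat.lt_of_le_of_ne h (fun h'' => hnm h''.symm)
      rcases hxsdisj m n h' t with hd | hd
      · simp only [hlov, hhiv] at hd
        linarith [hv.1, hv.2.1, hv.2.2.1, hv.2.2.2]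
      · simp only [hlov, hhiv] at hd
        linarith [hv.1, hv.2.1, hv.2.2.1, hv.2.2.2]
  refine ⟨fun n => (xs n : Set (Fin d → ℝ)), fun n => (xs n).2, ?_, ?_⟩
  · intro n m h
    by_contra hnm
    have t0 : Fin (k+1) := ⟨0, Nat.succ_pos k⟩
    set i0 : Fin d := emb t0 with hi0
    have hpoint : (ab (xs m)).1 ∈ (xs m : Set (Fin d → ℝ)) := by
      rw [hBeq (xs m)]
      intro i
      exact ⟨le_refl _, hab (xs m) i⟩
    have h2 : (xs n : Set (Fin d → ℝ)) = (xs m : Set (Fin d → ℝ)) := h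
    have hpoint' : (ab (xs m)).1 ∈ (xs n : Set (Fin d → ℝ)) := by
      rw [h2]; exact hpoint
    have h1 : (ab (xs n)).1 i0 ≤ (ab (xs m)).1 i0 ∧ (ab (xs m)).1 i0 ≤ (ab (xs n)).2 i0 := by
      rw [hBeq (xs n)] at hpoint'
      exact ⟨(hpoint' i0).1, (hpoint' i0).2⟩
    exact hpair n m hnm i0 (hembc t0) ((ab (xs m)).1 i0)
      ⟨h1.1, h1.2, le_refl _, hab (xs m) i0⟩
  · intro n m hnm K hK hKboth
    obtain ⟨J, cJ, hJcard, hKeq⟩ := hK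
    obtain ⟨⟨z1, hz1K, hz1B⟩, ⟨z2, hz2K, hz2B⟩⟩ := hKboth
    have hz1K' : ∀ i ∈ J, z1 i = cJ i := by rw [hKeq] at hz1K; exact hz1K
    have hz2K' : ∀ i ∈ J, z2 i = cJ i := by rw [hKeq] at hz2K; exact hz2K
    have hJI : J ⊆ I := by
      intro i hiJ
      by_contra hiI
      have hb1 : z1 ∈ {x | ∀ i, x i ∈ Set.Icc ((ab (xs n)).1 i) ((ab (xs n)).2 i)} := by
        rw [← hBeq (xs n)]; exact hz1B
      have hb2 : z2 ∈ {x | ∀ i, x i ∈ Set.Icc ((ab (xs m)).1 i) ((ab (xs m)).2 i)} := by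
        rw [← hBeq (xs m)]; exact hz2B
      have h1 := hb1 i
      have h2 := hb2 i
      rw [hz1K' i hiJ] at h1
      rw [hz2K' i hiJ] at h2
      exact hpair n m hnm i hiI (cJ i) ⟨h1.1, h1.2, h2.1, h2.2⟩
    have hcard := Finset.card_le_card hJI
    omega

end StabAux

theorem stmt7 (d k : ℕ) (hk : k < d)
    (F : Set (Set (Fin d → ℝ))) (hF : F.Infinite)
    (hbox : ∀ B ∈ F, IsBox B)
    (hnp : ¬ PiercedByFlats k F) :
    ∃ B : ℕ → Set (Fin d → ℝ), (∀ n, B n ∈ F) ∧ Function.Injective B ∧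
      ∀ i j : ℕ, i ≠ j → ∀ K, IsAxisFlat k K →
        ¬ ((K ∩ B i).Nonempty ∧ (K ∩ B j).Nonempty) := by
  classical
  have main : ∀ m k', k' < d → d - k' ≤ m → ¬ PiercedByFlats k' F →
      ∃ B : ℕ → Set (Fin d → ℝ), (∀ n, B n ∈ F) ∧ Function.Injective B ∧
        ∀ i j : ℕ, i ≠ j → ∀ K, IsAxisFlat k' K →
          ¬ ((K ∩ B i).Nonempty ∧ (K ∩ B j).Nonempty) := by
    intro m
    induction m with
    | zero =>
      intro k' hk' hm hnp'
      exact absurd hm (by omega)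
    | succ m ih =>
      intro k' hk' hm hnp'
      by_cases hP : PiercedByFlats (k'+1) F
      · obtain ⟨K', hK'1, hK'2⟩ := hP
        have hsplit : ∃ f ∈ K', ¬ PiercedByFlats k' {B ∈ F | (B ∩ f).Nonempty} := by
          by_contra hall
          push_neg at hall
          have hall' : ∀ f : {f // f ∈ K'}, ∃ Kp : Finset (Set (Fin d → ℝ)),
              (∀ g ∈ Kp, IsAxisFlat k' g) ∧
              ∀ B ∈ {B ∈ F | (B ∩ f.1).Nonempty}, ∃ g ∈ Kp, (B ∩ g).Nonempty :=
            fun f => hall f.1 f.2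
          choose Kp hKp1 hKp2 using hall'
          apply hnp'
          refine ⟨K'.attach.biUnion Kp, ?_, ?_⟩
          · intro g hg
            obtain ⟨f, _, hgf⟩ := Finset.mem_biUnion.mp hg
            exact hKp1 f g hgf
          · intro B hB
            obtain ⟨f, hf, hmeets⟩ := hK'2 B hB
            obtain ⟨g, hg, hm'⟩ := hKp2 ⟨f, hf⟩ B ⟨hB, hmeets⟩
            exact ⟨g, Finset.mem_biUnion.mpr ⟨⟨f, hf⟩, Finset.mem_attach _ _, hg⟩, hm'⟩
        obtain ⟨f, hfK', hfnp⟩ := hsplit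
        obtain ⟨I, c, hIcard, hfeq⟩ := hK'1 f hfK'
        have hmeet : ∀ B ∈ {B ∈ F | (B ∩ f).Nonempty},
            (B ∩ {x | ∀ i ∈ I, x i = c i}).Nonempty := by
          intro B hB
          rw [← hfeq]
          exact hB.2
        obtain ⟨Bs, h1, h2, h3⟩ := StabAux.core hk' {B ∈ F | (B ∩ f).Nonempty}
          (fun B hB => hbox B hB.1) I c hIcard hmeet hfnp
        exact ⟨Bs, fun n => (h1 n).1, h2, h3⟩
      · have hk1 : k' + 1 < d := by
          rcases Nat.lt_or_ge (k'+1) d with h | h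
          · exact h
          · exfalso
            apply hP
            have hkd : k' + 1 = d := by omega
            refine ⟨{Set.univ}, ?_, ?_⟩
            · intro g hg
              rw [Finset.mem_singleton] at hg
              subst hg
              exact ⟨∅, fun _ => 0, by simp [hkd], by ext x; simp⟩
            · intro B hB
              obtain ⟨a, b, hab, hBeq⟩ := hbox B hB
              refine ⟨Set.univ, Finset.mem_singleton_self _, a, ?_, trivial⟩
              rw [hBeq]
              intro i
              exact ⟨le_refl _, hab i⟩
        obtain ⟨Bs, h1, h2, h3⟩ := ih (k'+1) hk1 (by omega) hP
        refine ⟨Bs, h1, h2, ?_⟩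
        intro i j hij K hK hboth
        obtain ⟨J, cJ, hJcard, hKeq⟩ := hK
        have hJk : d - (k'+1) ≤ J.card := by omega
        obtain ⟨J', hJ'sub, hJ'card⟩ := Finset.exists_subset_card_eq hJk
        have hflat' : IsAxisFlat (k'+1) {x | ∀ i ∈ J', x i = cJ i} := ⟨J', cJ, hJ'card, rfl⟩
        apply h3 i j hij _ hflat'
        constructor
        · obtain ⟨z, hz1, hz2⟩ := hboth.1
          rw [hKeq] at hz1
          exact ⟨z, fun i hi => hz1 i (hJ'sub hi), hz2⟩
        · obtain ⟨z, hz1, hz2⟩ := hboth.2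
          rw [hKeq] at hz1
          exact ⟨z, fun i hi => hz1 i (hJ'sub hi), hz2⟩
  exact main d k hk (Nat.sub_le d k) hnp
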